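/- For every integer k ≥ 3 and real b > 0 with ln 2 − 2b + ln(b+1) = 0 and 1 − b − 1/(b+1) < −1/8, setting α = 2^k·b we have ln 2 + (α−1)·ln(1 − 2^{1−k}) + ln(2^{−k}α + 1 − 2^{1−k}) < 2^{1−k}·(1 − b − 1/(b+1) + 2^{−k}) < 0. -/

import Mathlib

lemma log_one_sub_le_aux {x : ℝ} (hx0 : 0 ≤ x) (hx1 : x < 1) :
    Real.log (1 - x) ≤ -x - x ^ 2 / 2 := by
  set f : ℝ → ℝ := fun t => Real.log (1 - t) + t + t ^ 2 / 2 with hf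
  have hcont : ContinuousOn f (Set.Icc 0 x) := by
    apply ContinuousOn.add
    apply ContinuousOn.add
    · apply Real.continuousOn_log.comp (continuous_const.sub continuous_id).continuousOn
      intro t ht
      simp only [Set.mem_compl_iff, Set.mem_singleton_iff, id_eq]
      have := ht.2
      intro h; simp only [Pi.sub_apply, id_eq] at h; nlinarith
    · exact continuousOn_id
    · exact (continuous_pow 2).continuousOn.div_const 2
  have hderiv : ∀ t ∈ Set.Ioo (0:ℝ) x, HasDerivAt f ((1 - t)⁻¹ * (-1) + 1 + t) t := by
    intro t ht
    have hne : 1 - t ≠ 0 := by nlinarith [ht.1, ht.2]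
    have h1 : HasDerivAt (fun t : ℝ => 1 - t) (-1) t := by
      simpa using (hasDerivAt_id t).const_sub 1
    have h2 : HasDerivAt (fun t : ℝ => Real.log (1 - t)) ((1 - t)⁻¹ * (-1)) t :=
      (Real.hasDerivAt_log hne).comp t h1
    have h3 : HasDerivAt (fun t : ℝ => t ^ 2 / 2) t t := by
      simpa using (hasDerivAt_pow 2 t).div_const 2
    exact (h2.add (hasDerivAt_id t)).add h3
  have hanti : AntitoneOn f (Set.Icc 0 x) := by
    apply antitoneOn_of_deriv_nonpos (convex_Icc 0 x) hcont
    · intro t ht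
      rw [interior_Icc] at ht
      exact (hderiv t ht).differentiableAt.differentiableWithinAt
    intro t ht
    rw [interior_Icc] at ht
    rw [(hderiv t ht).deriv]
    have h0 : 0 < 1 - t := by nlinarith [ht.1, ht.2]
    have h1 : 1 + t ≤ 1 / (1 - t) := by
      rw [le_div_iff₀ h0]
      nlinarith [ht.1, ht.2]
    rw [one_div] at h1
    linarith
  have h0mem : (0:ℝ) ∈ Set.Icc (0:ℝ) x := ⟨le_refl 0, hx0⟩
  have hxmem : x ∈ Set.Icc (0:ℝ) x := ⟨hx0, le_refl x⟩
  have := hanti h0mem hxmem hx0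
  simp only [hf] at this
  simp only [sub_zero, Real.log_one] at this
  nlinarith [this]

theorem threshold_estimate_chain (k : ℕ) (hk : 3 ≤ k) (b : ℝ) (hb : 0 < b)
    (hroot : Real.log 2 - 2 * b + Real.log (b + 1) = 0)
    (hb' : 1 - b - 1 / (b + 1) < -(1 / 8)) (α : ℝ) (hα : α = 2 ^ k * b) :
    Real.log 2 + (α - 1) * Real.log (1 - (2 : ℝ) ^ (1 - (k : ℤ)))
        + Real.log ((2 : ℝ) ^ (-(k : ℤ)) * α + 1 - (2 : ℝ) ^ (1 - (k : ℤ)))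
      < (2 : ℝ) ^ (1 - (k : ℤ)) * (1 - b - 1 / (b + 1) + (2 : ℝ) ^ (-(k : ℤ))) ∧
    (2 : ℝ) ^ (1 - (k : ℤ)) * (1 - b - 1 / (b + 1) + (2 : ℝ) ^ (-(k : ℤ))) < 0 := by
  set ε : ℝ := (2 : ℝ) ^ (-(k : ℤ)) with hεdef
  have hε : 0 < ε := by positivity
  have hεle : ε ≤ 1 / 8 := by
    rw [hεdef, zpow_neg]
    have h8 : (8 : ℝ) ≤ (2 : ℝ) ^ (k : ℤ) := by
      rw [zpow_natCast]
      calc (8 : ℝ) = 2 ^ 3 := by norm_num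
        _ ≤ 2 ^ k := pow_le_pow_right₀ (by norm_num) hk
    rw [inv_le_comm₀ (by positivity) (by norm_num)]
    linarith
  have h2e : (2 : ℝ) ^ (1 - (k : ℤ)) = 2 * ε := by
    rw [sub_eq_add_neg, zpow_add₀ (two_ne_zero), zpow_one, hεdef]
  have hεα : ε * α = b := by
    rw [hα, hεdef, ← mul_assoc, ← zpow_natCast (2 : ℝ) k, ← zpow_add₀ (two_ne_zero)]
    simp
  have hb18 : 1 / 8 < b := by
    by_contra h
    push_neg at h
    have h1 : 1 / (b + 1) ≤ 1 := by
      rw [div_le_one (by linarith)]; linarith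
    linarith
  have hbp : (0:ℝ) < b + 1 := by linarith
  have hα1 : 1 < α := by
    have h1 : ε * 1 < ε * α := by rw [mul_one]; linarith
    exact lt_of_mul_lt_mul_left h1 hε.le
  have hT1 : Real.log (1 - 2 * ε) ≤ -(2 * ε) - (2 * ε) ^ 2 / 2 :=
    log_one_sub_le_aux (by positivity) (by linarith)
  have hT1' : (α - 1) * Real.log (1 - 2 * ε) ≤ (α - 1) * (-(2 * ε) - (2 * ε) ^ 2 / 2) :=
    mul_le_mul_of_nonneg_left hT1 (by linarith)
  have hy : (0:ℝ) < b + 1 - 2 * ε := by linarith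
  have hT2 : Real.log (ε * α + 1 - 2 * ε) < Real.log (b + 1) - 2 * ε / (b + 1) := by
    rw [hεα]
    have hne1 : (b + 1 - 2 * ε) / (b + 1) ≠ 1 := by
      intro hcon
      rw [div_eq_one_iff_eq hbp.ne'] at hcon
      linarith
    have hratio : Real.log ((b + 1 - 2 * ε) / (b + 1)) < (b + 1 - 2 * ε) / (b + 1) - 1 :=
      Real.log_lt_sub_one_of_pos (by positivity) hne1
    rw [Real.log_div hy.ne' hbp.ne'] at hratio
    have heq : (b + 1 - 2 * ε) / (b + 1) - 1 = -(2 * ε / (b + 1)) := by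
      field_simp
      ring
    rw [heq] at hratio
    linarith
  have key : Real.log 2 + (α - 1) * (-(2 * ε) - (2 * ε) ^ 2 / 2)
      + (Real.log (b + 1) - 2 * ε / (b + 1))
      = 2 * ε * (1 - b - 1 / (b + 1) + ε) := by
    linear_combination hroot + (-2 - 2 * ε) * hεα
  rw [h2e]
  constructor
  · linarith [hT1', hT2, key]
  · exact mul_neg_of_pos_of_neg (by positivity) (by linarith)
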